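/- Let X, Y be upper triangular matrices in GL(2, K) over an algebraically closed field K with X^3 = Y^2. Then either X^3 = Y^2 is a scalar matrix, or there exists an upper triangular Z ∈ GL(2, K) with X = Z^2 and Y = Z^3. -/

import Mathlib

open Matrix

lemma tri_sq {K : Type*} [Field K] (a b c : K) :
    !![a, b; 0, c] ^ 2 = !![a^2, b*(a+c); 0, c^2] := by
  rw [pow_two, Matrix.mul_fin_two]
  ext i j
  fin_cases i <;> fin_cases j <;> simp <;> ring

lemma tri_cube {K : Type*} [Field K] (a b c : K) :
    !![a, b; 0, c] ^ 3 = !![a^3, b*(a^2+a*c+c^2); 0, c^3] := by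
  rw [pow_succ, tri_sq, Matrix.mul_fin_two]
  ext i j
  fin_cases i <;> fin_cases j <;> simp <;> ring

theorem upper_triangular_cube_eq_square {K : Type*} [Field K] [IsAlgClosed K]
    (X Y : Matrix (Fin 2) (Fin 2) K) (hXu : IsUnit X.det) (hYu : IsUnit Y.det)
    (hXt : X 1 0 = 0) (hYt : Y 1 0 = 0) (h : X ^ 3 = Y ^ 2) :
    (∃ c : K, X ^ 3 = c • (1 : Matrix (Fin 2) (Fin 2) K)) ∨
    ∃ Z : Matrix (Fin 2) (Fin 2) K, IsUnit Z.det ∧ Z 1 0 = 0 ∧ X = Z ^ 2 ∧ Y = Z ^ 3 := by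
  have hX : X = !![X 0 0, X 0 1; 0, X 1 1] := by
    ext i j; fin_cases i <;> fin_cases j <;> simp [hXt]
  have hY : Y = !![Y 0 0, Y 0 1; 0, Y 1 1] := by
    ext i j; fin_cases i <;> fin_cases j <;> simp [hYt]
  set p := X 0 0 with hpd
  set q := X 0 1 with hqd
  set r := X 1 1 with hrd
  set s := Y 0 0 with hsd
  set t := Y 0 1 with htd
  set u := Y 1 1 with hud
  have hp0 : p ≠ 0 ∧ r ≠ 0 := by
    rw [hX] at hXu
    simpa [Matrix.det_fin_two_of, isUnit_iff_ne_zero] using hXu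
  have hs0 : s ≠ 0 ∧ u ≠ 0 := by
    rw [hY] at hYu
    simpa [Matrix.det_fin_two_of, isUnit_iff_ne_zero] using hYu
  obtain ⟨hp, hr⟩ := hp0
  obtain ⟨hs, hu⟩ := hs0
  rw [hX, hY, tri_cube, tri_sq] at h
  have h00 : p ^ 3 = s ^ 2 := by
    have := congrFun (congrFun h 0) 0; simpa using this
  have h11 : r ^ 3 = u ^ 2 := by
    have := congrFun (congrFun h 1) 1; simpa using this
  have h01 : q * (p ^ 2 + p * r + r ^ 2) = t * (s + u) := by
    have := congrFun (congrFun h 0) 1; simpa using this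
  set a := s / p with had
  set b := u / r with hbd
  have ha0 : a ≠ 0 := div_ne_zero hs hp
  have hb0 : b ≠ 0 := div_ne_zero hu hr
  have ha2 : a ^ 2 = p := by
    rw [had]; field_simp; linear_combination -h00
  have ha3 : a ^ 3 = s := by
    rw [had]; field_simp; linear_combination -h00
  have hb2 : b ^ 2 = r := by
    rw [hbd]; field_simp; linear_combination -h11
  have hb3 : b ^ 3 = u := by
    rw [hbd]; field_simp; linear_combination -h11
  have hq : q * (a^4 + a^2*b^2 + b^4) = t * (a^3 + b^3) := by
    rw [ha3, hb3]
    calc q * (a^4 + a^2*b^2 + b^4) = q * ((a^2)^2 + (a^2)*(b^2) + (b^2)^2) := by ring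
    _ = t * (s + u) := by rw [ha2, hb2]; linear_combination h01
  -- helper to close the scalar case
  have scalar : q * (p ^ 2 + p * r + r ^ 2) = 0 → r ^ 3 = p ^ 3 →
      (∃ c : K, X ^ 3 = c • (1 : Matrix (Fin 2) (Fin 2) K)) ∨
      ∃ Z : Matrix (Fin 2) (Fin 2) K, IsUnit Z.det ∧ Z 1 0 = 0 ∧ X = Z ^ 2 ∧ Y = Z ^ 3 := by
    intro hoff hdiag
    left
    refine ⟨p ^ 3, ?_⟩
    rw [hX, tri_cube]
    ext i j
    fin_cases i <;> fin_cases j <;>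
      simp [Matrix.smul_apply, Matrix.one_apply, hoff, hdiag]
  by_cases hab : a + b = 0
  · -- b = -a
    apply scalar
    · have hsu : s + u = 0 := by rw [← ha3, ← hb3]; linear_combination (a^2 - a*b + b^2) * hab
      rw [h01, hsu, mul_zero]
    · rw [← ha2, ← hb2]; linear_combination (b^5 - a*b^4 + a^2*b^3 - a^3*b^2 + a^4*b - a^5) * hab
  by_cases hS : a^2 + a*b + b^2 = 0
  · apply scalar
    · rw [← ha2, ← hb2]
      calc q * ((a^2)^2 + a^2*b^2 + (b^2)^2) = q * ((a^2+a*b+b^2) * (a^2-a*b+b^2)) := by ring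
      _ = 0 := by rw [hS]; ring
    · rw [← ha2, ← hb2]; linear_combination (b^3 + a^3) * (b - a) * hS
  by_cases hD : a^2 - a*b + b^2 = 0
  · apply scalar
    · have hsu : s + u = 0 := by rw [← ha3, ← hb3]; linear_combination (a + b) * hD
      rw [h01, hsu, mul_zero]
    · rw [← ha2, ← hb2]
      -- b^6 = a^6 since a^3 = -b^3
      have h3 : a^3 + b^3 = 0 := by linear_combination (a + b) * hD
      linear_combination (b^3 - a^3) * h3
  · -- generic case: construct Z
    right
    set l := q / (a + b) with hld
    have hqt : q * (a^2 + a*b + b^2) = t * (a + b) := by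
      apply mul_right_cancel₀ hD
      linear_combination hq
    refine ⟨!![a, l; 0, b], ?_, ?_, ?_, ?_⟩
    · simp [Matrix.det_fin_two_of, isUnit_iff_ne_zero, ha0, hb0]
    · simp
    · rw [hX, tri_sq]
      ext i j
      fin_cases i <;> fin_cases j <;> simp [ha2, hb2]
      rw [hld]; field_simp
    · rw [hY, tri_cube]
      ext i j
      fin_cases i <;> fin_cases j <;> simp [ha3, hb3]
      rw [hld]; field_simp
      linear_combination -hqt
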